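/- Let A be a bounded subset of ℝ^m, E = ℝ^d, μ a probability measure on E, and w : E × A → ℝ measurable with x ↦ inf_{a∈A} w(x,a) μ-integrable and w(x,·) bounded below uniformly for μ-a.e. x. Then the infimum over measurable selections commutes with integration: inf over measurable α̃ : E → A of ∫_E w(x, α̃(x)) μ(dx) = ∫_E inf_{a ∈ A} w(x,a) μ(dx). -/

import Mathlib

open MeasureTheory

section SelectionMachinery
open Set Filter Topology ENNReal NNReal
set_option linter.unusedSectionVars false

def Kset (σ : ℕ → ℕ) : Set (ℕ → ℕ) := {z | ∀ i, z i ≤ σ i}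

lemma isCompact_Kset (σ : ℕ → ℕ) : IsCompact (Kset σ) := by
  have : Kset σ = Set.pi univ (fun i => Set.Iic (σ i)) := by
    ext z; simp [Kset, Set.pi]
  rw [this]
  exact isCompact_univ_pi (fun i => (Set.finite_Iic _).isCompact)

def Lset (σ : ℕ → ℕ) (k : ℕ) : Set (ℕ → ℕ) := {z | ∀ i < k, z i ≤ σ i}

lemma Lset_congr {s t : ℕ → ℕ} (k : ℕ) (h : ∀ i < k, s i = t i) : Lset s k = Lset t k := by
  ext z; constructor <;> intro hz i hi
  · rw [← h i hi]; exact hz i hi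
  · rw [h i hi]; exact hz i hi

lemma Lset_update (s : ℕ → ℕ) (k n : ℕ) :
    Lset (Function.update s k n) (k + 1) = Lset s k ∩ {z | z k ≤ n} := by
  ext z
  simp only [Lset, mem_setOf_eq, mem_inter_iff, Nat.lt_succ_iff_lt_or_eq]
  constructor
  · intro h
    refine ⟨fun i hi => ?_, ?_⟩
    · have := h i (Or.inl hi)
      rwa [Function.update_of_ne hi.ne] at this
    · have := h k (Or.inr rfl)
      rwa [Function.update_self] at this
  · rintro ⟨h1, h2⟩ i (hi | rfl)
    · rw [Function.update_of_ne hi.ne]; exact h1 i hi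
    · rwa [Function.update_self]

lemma iInter_Lset (σ : ℕ → ℕ) : ⋂ k, Lset σ k = Kset σ := by
  ext z
  simp only [mem_iInter, Lset, Kset, mem_setOf_eq]
  exact ⟨fun h i => h (i + 1) i (Nat.lt_succ_self i), fun h k i _ => h i⟩

section Extract
variable {X : Type*} [TopologicalSpace X] [MeasurableSpace X] [BorelSpace X]

set_option linter.unusedSectionVars false in
lemma extract_step (μ : Measure X) [IsFiniteMeasure μ] (F : (ℕ → ℕ) → X) {ε : ℝ≥0∞}
    (hε : ε ≠ 0) (s : ℕ → ℕ) (k : ℕ) :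
    ∃ n, μ (F '' Lset s k) ≤ μ (F '' Lset (Function.update s k n) (k + 1)) + ε := by
  by_cases h0 : μ (F '' Lset s k) ≤ ε
  · exact ⟨0, h0.trans (le_add_self)⟩
  push_neg at h0
  have hmono : Monotone (fun n => F '' Lset (Function.update s k n) (k + 1)) := by
    intro n n' hnn'
    apply image_mono
    rw [Lset_update, Lset_update]
    exact inter_subset_inter_right _ (fun z hz => le_trans hz hnn')
  have hU2 : (⋃ n, Lset (Function.update s k n) (k + 1)) = Lset s k := by
    ext z
    simp only [mem_iUnion, Lset_update, mem_inter_iff, mem_setOf_eq]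
    constructor
    · rintro ⟨n, h, _⟩; exact h
    · intro h; exact ⟨z k, h, le_refl _⟩
  have hsup : μ (F '' Lset s k) = ⨆ n, μ (F '' Lset (Function.update s k n) (k + 1)) := by
    conv_lhs => rw [← hU2, image_iUnion]
    exact (hmono.comp (monotone_id (α := ℕ))).measure_iUnion
  have hlt : μ (F '' Lset s k) - ε < ⨆ n, μ (F '' Lset (Function.update s k n) (k + 1)) := by
    rw [← hsup]
    exact ENNReal.sub_lt_self (measure_ne_top _ _) (lt_of_le_of_lt zero_le h0).ne' hε
  obtain ⟨n, hn⟩ := lt_iSup_iff.mp hlt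
  exact ⟨n, tsub_le_iff_right.mp hn.le⟩

lemma exists_sigma (μ : Measure X) [IsFiniteMeasure μ] [μ.OuterRegular]
    {F : (ℕ → ℕ) → X} (hF : Continuous F) {δ : ℝ≥0∞} (hδ : δ ≠ 0) :
    ∃ σ : ℕ → ℕ, μ (range F) ≤ μ (F '' Kset σ) + δ := by
  have hhalf : (δ / 2) ≠ 0 := (ENNReal.half_pos hδ).ne'
  -- sequence of epsilons summing to < δ/2
  obtain ⟨ε', hε'pos, hε'sum⟩ := ENNReal.exists_pos_sum_of_countable hhalf ℕ
  -- recursive construction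
  have hε'ne : ∀ k, ((ε' k : ℝ≥0∞)) ≠ 0 := fun k => by exact_mod_cast (hε'pos k).ne'
  let n : (ℕ → ℕ) → ℕ → ℕ := fun s k => Classical.choose (extract_step μ F (hε'ne k) s k)
  let τ : ℕ → (ℕ → ℕ) := fun k => Nat.rec (fun _ => 0) (fun k s => Function.update s k (n s k)) k
  have hτsucc : ∀ k, τ (k + 1) = Function.update (τ k) k (n (τ k) k) := fun k => rfl
  set σ : ℕ → ℕ := fun k => τ (k + 1) k with hσ
  have hagree : ∀ k i, i < k → τ k i = σ i := by
    intro k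
    induction k with
    | zero => intro i hi; omega
    | succ k ih =>
      intro i hi
      rcases Nat.lt_succ_iff_lt_or_eq.mp hi with hi | rfl
      · rw [hτsucc, Function.update_of_ne hi.ne, ih i hi]
      · rfl
  have hLset : ∀ k, Lset (τ k) k = Lset σ k := fun k => Lset_congr k (hagree k)
  have hP : ∀ k, μ (range F) ≤ μ (F '' Lset (τ k) k) + ∑ i ∈ Finset.range k, (ε' i : ℝ≥0∞) := by
    intro k
    induction k with
    | zero =>
      simp only [Finset.range_zero, Finset.sum_empty, add_zero]
      have : Lset (τ 0) 0 = univ := by ext z; simp [Lset]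
      rw [this, image_univ]
    | succ k ih =>
      have hstep := Classical.choose_spec (extract_step μ F (hε'ne k) (τ k) k)
      calc μ (range F) ≤ μ (F '' Lset (τ k) k) + ∑ i ∈ Finset.range k, (ε' i : ℝ≥0∞) := ih
        _ ≤ (μ (F '' Lset (τ (k+1)) (k+1)) + ε' k) + ∑ i ∈ Finset.range k, (ε' i : ℝ≥0∞) := by
            exact add_le_add_left hstep _
        _ = μ (F '' Lset (τ (k+1)) (k+1)) + ∑ i ∈ Finset.range (k+1), (ε' i : ℝ≥0∞) := by
            rw [Finset.sum_range_succ]; ring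
  have hQ : ∀ k, μ (range F) ≤ μ (F '' Lset σ k) + δ / 2 := by
    intro k
    have := hP k
    rw [hLset k] at this
    refine this.trans ?_
    gcongr
    exact (ENNReal.sum_le_tsum _).trans hε'sum.le
  -- outer regularity
  obtain ⟨U, hKU, hUopen, hUle⟩ := Set.exists_isOpen_le_add (F '' Kset σ) μ hhalf
  -- compactness claim
  have hclaim : ∃ k, F '' Lset σ k ⊆ U := by
    by_contra hcon
    push_neg at hcon
    have : ∀ k, ∃ z, z ∈ Lset σ k ∧ F z ∉ U := by
      intro k
      obtain ⟨y, hy, hyU⟩ := not_subset.mp (hcon k)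
      obtain ⟨z, hz, rfl⟩ := hy
      exact ⟨z, hz, hyU⟩
    choose z hzL hzU using this
    set w : ℕ → (ℕ → ℕ) := fun k i => min (z k i) (σ i) with hw
    have hwmem : ∀ k, w k ∈ Kset σ := fun k i => min_le_right _ _
    obtain ⟨a, haK, φ, hφ, hφtendsto⟩ := (isCompact_Kset σ).tendsto_subseq hwmem
    have hztendsto : Tendsto (fun j => z (φ j)) atTop (𝓝 a) := by
      rw [tendsto_pi_nhds]
      intro i
      have h1 : Tendsto (fun j => w (φ j) i) atTop (𝓝 (a i)) :=
        (tendsto_pi_nhds.mp hφtendsto) i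
      apply h1.congr'
      filter_upwards [eventually_ge_atTop (i + 1)] with j hj
      have hij : i < φ j := lt_of_lt_of_le (Nat.lt_of_lt_of_le (Nat.lt_succ_self i) hj) (hφ.le_apply)
      exact min_eq_left (hzL (φ j) i hij)
    have hFa : F a ∈ U := hKU ⟨a, haK, rfl⟩
    have : ∀ᶠ j in atTop, F (z (φ j)) ∈ U :=
      ((hF.tendsto a).comp hztendsto).eventually_mem (hUopen.mem_nhds hFa)
    obtain ⟨j, hj⟩ := this.exists
    exact hzU (φ j) hj
  obtain ⟨k, hk⟩ := hclaim
  refine ⟨σ, ?_⟩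
  calc μ (range F) ≤ μ (F '' Lset σ k) + δ / 2 := hQ k
    _ ≤ μ U + δ / 2 := by gcongr <;> exact measure_mono hk
    _ ≤ (μ (F '' Kset σ) + δ / 2) + δ / 2 := by gcongr
    _ = μ (F '' Kset σ) + δ := by rw [add_assoc, ENNReal.add_halves]

end Extract


set_option linter.unusedSectionVars false
section Sel
variable {X : Type*} [TopologicalSpace X] [T2Space X] [MeasurableSpace X] [OpensMeasurableSpace X]

/-- Image under `F` of the cylinder of elements of `Kset σ` with prefix `s` of length `k`. -/
def cylM (F : (ℕ → ℕ) → X) (σ : ℕ → ℕ) (k : ℕ) (s : ℕ → ℕ) : Set X :=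
  F '' (Kset σ ∩ {z | ∀ i < k, z i = s i})

lemma isCompact_cylM {F : (ℕ → ℕ) → X} (hF : Continuous F) (σ : ℕ → ℕ) (k : ℕ) (s : ℕ → ℕ) :
    IsCompact (cylM F σ k s) := by
  apply IsCompact.image _ hF
  apply (isCompact_Kset σ).inter_right
  have : {z : ℕ → ℕ | ∀ i < k, z i = s i} = ⋂ i ∈ Finset.range k, (fun z : ℕ → ℕ => z i) ⁻¹' {s i} := by
    ext z; simp
  rw [this]
  exact isClosed_biInter (fun i _ => (IsClosed.preimage (continuous_apply i)) (isClosed_singleton))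

lemma measurableSet_cylM {F : (ℕ → ℕ) → X} (hF : Continuous F) (σ : ℕ → ℕ) (k : ℕ) (s : ℕ → ℕ) :
    MeasurableSet (cylM F σ k s) :=
  (isCompact_cylM hF σ k s).isClosed.measurableSet

/-- The least continuation `j` of the prefix `s` (of length `k`) such that `x` is still in the
image of the corresponding cylinder. -/
noncomputable def gam (F : (ℕ → ℕ) → X) (σ : ℕ → ℕ) (k : ℕ) (s : ℕ → ℕ) (x : X) : ℕ :=
  sInf {j | x ∈ cylM F σ (k + 1) (Function.update s k j)}

/-- The selected prefix of length `k` at `x` (extended by `0`). -/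
noncomputable def pfun (F : (ℕ → ℕ) → X) (σ : ℕ → ℕ) : ℕ → X → (ℕ → ℕ)
  | 0 => fun _ _ => 0
  | (k + 1) => fun x => Function.update (pfun F σ k x) k (gam F σ k (pfun F σ k x) x)

/-- The selected branch at `x`. -/
noncomputable def selFun (F : (ℕ → ℕ) → X) (σ : ℕ → ℕ) (x : X) : ℕ → ℕ := fun k => pfun F σ (k + 1) x k

variable {F : (ℕ → ℕ) → X} {σ : ℕ → ℕ}

lemma pfun_eq_selFun (k : ℕ) (x : X) {i : ℕ} (hi : i < k) : pfun F σ k x i = selFun F σ x i := by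
  induction k with
  | zero => omega
  | succ k ih =>
    rcases Nat.lt_succ_iff_lt_or_eq.mp hi with hi' | rfl
    · show Function.update (pfun F σ k x) k _ i = _
      rw [Function.update_of_ne hi'.ne, ih hi']
    · rfl

lemma pfun_invariant (x : X) (hx : x ∈ F '' Kset σ) (k : ℕ) : x ∈ cylM F σ k (pfun F σ k x) := by
  induction k with
  | zero =>
    simpa [cylM] using hx
  | succ k ih =>
    obtain ⟨z, ⟨hzK, hzpre⟩, hzx⟩ := ih
    have hne : {j | x ∈ cylM F σ (k + 1) (Function.update (pfun F σ k x) k j)}.Nonempty := by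
      refine ⟨z k, z, ⟨hzK, fun i hi => ?_⟩, hzx⟩
      rcases Nat.lt_succ_iff_lt_or_eq.mp hi with hi' | rfl
      · rw [Function.update_of_ne hi'.ne, hzpre i hi']
      · rw [Function.update_self]
    have := Nat.sInf_mem hne
    exact this

lemma selFun_mem_Kset (x : X) (hx : x ∈ F '' Kset σ) : selFun F σ x ∈ Kset σ := by
  intro k
  obtain ⟨z, ⟨hzK, hzpre⟩, _⟩ := pfun_invariant x hx (k + 1)
  have : z k = pfun F σ (k + 1) x k := hzpre k (Nat.lt_succ_self k)
  rw [show selFun F σ x k = pfun F σ (k + 1) x k from rfl, ← this]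
  exact hzK k

lemma F_selFun (hF : Continuous F) (x : X) (hx : x ∈ F '' Kset σ) : F (selFun F σ x) = x := by
  have hz : ∀ k, ∃ z, (z ∈ Kset σ ∧ ∀ i < k, z i = pfun F σ k x i) ∧ F z = x :=
    fun k => pfun_invariant x hx k
  choose z hzmem hzx using hz
  have htend : Tendsto z atTop (𝓝 (selFun F σ x)) := by
    rw [tendsto_pi_nhds]
    intro i
    apply tendsto_const_nhds.congr'
    filter_upwards [eventually_ge_atTop (i + 1)] with k hk
    rw [← pfun_eq_selFun k x (Nat.lt_of_succ_le hk), (hzmem k).2 i (Nat.lt_of_succ_le hk)]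
  have h1 : Tendsto (fun k => F (z k)) atTop (𝓝 (F (selFun F σ x))) := (hF.tendsto _).comp htend
  have h2 : Tendsto (fun k => F (z k)) atTop (𝓝 x) := by
    simpa [hzx] using (tendsto_const_nhds : Tendsto (fun _ : ℕ => x) atTop (𝓝 x))
  exact tendsto_nhds_unique h1 h2

/-- Auxiliary: measurability of `sInf`-type selections. -/
lemma measurableSet_sInf_eq {T : ℕ → Set X} (hT : ∀ j, MeasurableSet (T j)) (j₀ : ℕ) :
    MeasurableSet {x | sInf {j | x ∈ T j} = j₀} := by
  have : {x | sInf {j | x ∈ T j} = j₀}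
      = (T j₀ ∩ ⋂ j ∈ Finset.range j₀, (T j)ᶜ) ∪
        (if j₀ = 0 then ⋂ j, (T j)ᶜ else (∅ : Set X)) := by
    ext x
    simp only [mem_setOf_eq, mem_union, mem_inter_iff, mem_iInter, Finset.mem_range, mem_compl_iff]
    constructor
    · intro h
      by_cases hne : {j | x ∈ T j}.Nonempty
      · left
        have hmem := Nat.sInf_mem hne
        rw [h] at hmem
        refine ⟨hmem, fun j hj hjT => ?_⟩
        have := Nat.sInf_le (s := {j | x ∈ T j}) hjT
        omega
      · right
        rw [not_nonempty_iff_eq_empty] at hne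
        have h0 : sInf {j | x ∈ T j} = 0 := by rw [hne]; exact Nat.sInf_empty
        rw [h0] at h
        simp only [← h, if_true, mem_iInter]
        intro j
        intro hj
        have : j ∈ {j | x ∈ T j} := hj
        rw [hne] at this
        exact this
    · rintro (⟨hmem, hlt⟩ | hempty)
      · refine le_antisymm (Nat.sInf_le hmem) ?_
        by_contra hcon
        push_neg at hcon
        have hne : {j | x ∈ T j}.Nonempty := ⟨j₀, hmem⟩
        have := Nat.sInf_mem hne
        exact hlt _ hcon this
      · by_cases h0 : j₀ = 0
        · subst h0
          simp only [if_true, mem_iInter] at hempty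
          have : {j | x ∈ T j} = ∅ := by
            ext j; simp only [mem_setOf_eq, mem_empty_iff_false, iff_false]; exact hempty j
          rw [this]; exact Nat.sInf_empty
        · simp only [h0, if_false] at hempty
          exact absurd hempty (notMem_empty x)
    -- end ext
  rw [this]
  refine ((hT j₀).inter (MeasurableSet.biInter (Finset.range j₀).countable_toSet
    (fun j _ => (hT j).compl))).union ?_
  split_ifs
  · exact MeasurableSet.iInter (fun j => (hT j).compl)
  · exact MeasurableSet.empty

/-- Prefixes live in a countable set. -/
def Rset (k : ℕ) : Set (ℕ → ℕ) := {s | ∀ i, k ≤ i → s i = 0}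

lemma countable_Rset (k : ℕ) : (Rset k).Countable := by
  have : Rset k ⊆ range (fun v : Fin k → ℕ => fun i => if h : i < k then v ⟨i, h⟩ else 0) := by
    intro s hs
    refine ⟨fun i => s i, ?_⟩
    ext i
    by_cases h : i < k
    · simp [h]
    · simp only [dif_neg h]
      exact (hs i (le_of_not_gt h)).symm
  exact Set.Countable.mono this (countable_range _)

lemma pfun_mem_Rset (k : ℕ) (x : X) : pfun F σ k x ∈ Rset k := by
  induction k with
  | zero => intro i _; rfl
  | succ k ih =>
    intro i hi
    show Function.update (pfun F σ k x) k _ i = 0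
    rw [Function.update_of_ne (by omega : i ≠ k)]
    exact ih i (by omega)

lemma measurableSet_pfun_eq (hF : Continuous F) (k : ℕ) (s₀ : ℕ → ℕ) :
    MeasurableSet {x | pfun F σ k x = s₀} := by
  induction k generalizing s₀ with
  | zero =>
    by_cases h : (fun _ : ℕ => 0) = s₀
    · have : {x : X | pfun F σ 0 x = s₀} = univ := by
        ext x; simp only [mem_setOf_eq, mem_univ, iff_true]; exact h
      rw [this]; exact MeasurableSet.univ
    · have : {x : X | pfun F σ 0 x = s₀} = ∅ := by
        ext x; simp only [mem_setOf_eq, mem_empty_iff_false, iff_false]; exact h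
      rw [this]; exact MeasurableSet.empty
  | succ k ih =>
    have hdecomp : {x | pfun F σ (k + 1) x = s₀}
        = ⋃ s ∈ Rset k, ({x | pfun F σ k x = s} ∩
            {x | Function.update s k (gam F σ k s x) = s₀}) := by
      ext x
      simp only [mem_iUnion, mem_inter_iff, mem_setOf_eq]
      constructor
      · intro h
        exact ⟨pfun F σ k x, pfun_mem_Rset k x, rfl, h⟩
      · rintro ⟨s, _, h1, h2⟩
        show Function.update (pfun F σ k x) k (gam F σ k (pfun F σ k x) x) = s₀
        rw [h1]; exact h2
    rw [hdecomp]
    refine MeasurableSet.biUnion (countable_Rset k) (fun s _ => (ih s).inter ?_)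
    by_cases hc : Function.update s k (s₀ k) = s₀
    · have : {x | Function.update s k (gam F σ k s x) = s₀} = {x | gam F σ k s x = s₀ k} := by
        ext x
        simp only [mem_setOf_eq]
        constructor
        · intro h
          have := congrArg (fun t => t k) h
          simpa using this
        · intro h; rw [h]; exact hc
      rw [this]
      exact measurableSet_sInf_eq (fun j => measurableSet_cylM hF σ (k + 1) _) (s₀ k)
    · have : {x | Function.update s k (gam F σ k s x) = s₀} = ∅ := by
        ext x
        simp only [mem_setOf_eq, mem_empty_iff_false, iff_false]
        intro h
        apply hc
        have hk : gam F σ k s x = s₀ k := by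
          have := congrArg (fun t => t k) h
          simpa using this
        rw [← hk]
        exact h
      rw [this]; exact MeasurableSet.empty

lemma measurable_selFun (hF : Continuous F) : Measurable (selFun F σ (X := X)) := by
  apply measurable_pi_lambda
  intro k
  apply measurable_to_countable'
  intro j
  have : (fun x => selFun F σ x k) ⁻¹' {j}
      = ⋃ s₀ ∈ Rset (k + 1) ∩ {s | s k = j}, {x | pfun F σ (k + 1) x = s₀} := by
    ext x
    simp only [mem_preimage, mem_singleton_iff, mem_iUnion, mem_inter_iff, mem_setOf_eq]
    constructor
    · intro h
      exact ⟨pfun F σ (k + 1) x, ⟨pfun_mem_Rset (k + 1) x, h⟩, rfl⟩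
    · rintro ⟨s₀, ⟨_, hs₀k⟩, h⟩
      show pfun F σ (k + 1) x k = j
      rw [h]; exact hs₀k
  rw [this]
  exact MeasurableSet.biUnion ((countable_Rset (k + 1)).mono (inter_subset_left))
    (fun s₀ _ => measurableSet_pfun_eq hF (k + 1) s₀)

/-- Measurable selection over the compact core: there is a measurable map `sel` such that for
every `x` in the (compact) image `F '' Kset σ`, `sel x ∈ Kset σ` and `F (sel x) = x`. -/
lemma exists_measurable_selection_compact (hF : Continuous F) (σ : ℕ → ℕ) :
    ∃ sel : X → (ℕ → ℕ), Measurable sel ∧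
      ∀ x ∈ F '' Kset σ, sel x ∈ Kset σ ∧ F (sel x) = x :=
  ⟨selFun F σ, measurable_selFun hF,
    fun x hx => ⟨selFun_mem_Kset x hx, F_selFun hF x hx⟩⟩

end Sel

section AESel
variable {X Y : Type*} [TopologicalSpace X] [PolishSpace X] [MeasurableSpace X] [BorelSpace X]
  [TopologicalSpace Y] [PolishSpace Y] [MeasurableSpace Y] [BorelSpace Y] [Nonempty Y]

lemma exists_partial_selection (μ : Measure X) [IsFiniteMeasure μ]
    {S : Set (X × Y)} (hS : MeasurableSet S) {T : Set X} (hT : MeasurableSet T)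
    (hsec : ∀ x ∈ T, ∃ y, (x, y) ∈ S) {δ : ℝ≥0∞} (hδ : δ ≠ 0) :
    ∃ (G : Set X) (β : X → Y), MeasurableSet G ∧ Measurable β ∧
      (∀ x ∈ G, (x, β x) ∈ S) ∧ μ (T \ G) ≤ δ := by
  have hana : MeasureTheory.AnalyticSet S := hS.analyticSet
  rw [MeasureTheory.AnalyticSet] at hana
  rcases hana with hempty | ⟨h, hcont, hrange⟩
  · -- S empty, so T empty
    have hTempty : T = ∅ := by
      ext x
      simp only [mem_empty_iff_false, iff_false]
      intro hx
      obtain ⟨y, hy⟩ := hsec x hx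
      rw [hempty] at hy
      exact hy
    refine ⟨∅, fun _ => Classical.arbitrary Y, MeasurableSet.empty, measurable_const,
      fun x hx => absurd hx (notMem_empty x), ?_⟩
    simp [hTempty]
  · set F : (ℕ → ℕ) → X := fun z => (h z).1 with hF
    have hFcont : Continuous F := continuous_fst.comp hcont
    obtain ⟨σ, hσ⟩ := exists_sigma (μ.restrict T) hFcont hδ
    obtain ⟨sel, hselmeas, hsel⟩ := exists_measurable_selection_compact hFcont σ
    set G : Set X := F '' Kset σ with hG
    have hGcomp : IsCompact G := (isCompact_Kset σ).image hFcont
    have hGmeas : MeasurableSet G := hGcomp.isClosed.measurableSet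
    set β : X → Y := fun x => (h (sel x)).2 with hβ
    have hβmeas : Measurable β := (continuous_snd.comp hcont).measurable.comp hselmeas
    refine ⟨G, β, hGmeas, hβmeas, ?_, ?_⟩
    · intro x hx
      obtain ⟨hselK, hFsel⟩ := hsel x hx
      have hmem : h (sel x) ∈ S := by rw [← hrange]; exact mem_range_self _
      have heq : h (sel x) = (x, β x) := by
        calc h (sel x) = ((h (sel x)).1, (h (sel x)).2) := (Prod.mk.eta).symm
          _ = (x, β x) := by rw [show (h (sel x)).1 = x from hFsel]
      exact heq ▸ hmem
    · have hTsub : T ⊆ range F := by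
        intro x hx
        obtain ⟨y, hy⟩ := hsec x hx
        rw [← hrange] at hy
        obtain ⟨z, hz⟩ := hy
        exact ⟨z, by show (h z).1 = x; rw [hz]⟩
      have h1 : μ.restrict T univ ≤ μ.restrict T G + δ := by
        calc μ.restrict T univ = μ T := by rw [Measure.restrict_apply_univ]
          _ = μ.restrict T T := (Measure.restrict_apply_self μ T).symm
          _ ≤ μ.restrict T (range F) := measure_mono hTsub
          _ ≤ μ.restrict T G + δ := hσ
      have h2 : μ (T \ G) = μ.restrict T Gᶜ := by
        rw [Measure.restrict_apply hGmeas.compl, diff_eq, inter_comm]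
      rw [h2, measure_compl hGmeas (measure_ne_top _ _)]
      exact tsub_le_iff_right.mpr (by rwa [add_comm] at h1)

lemma exists_ae_selection (μ : Measure X) [IsFiniteMeasure μ]
    {S : Set (X × Y)} (hS : MeasurableSet S) {T : Set X} (hT : MeasurableSet T)
    (hsec : ∀ x ∈ T, ∃ y, (x, y) ∈ S) :
    ∃ β : X → Y, Measurable β ∧ ∀ᵐ x ∂μ, x ∈ T → (x, β x) ∈ S := by
  classical
  have hex : ∀ k : ℕ, ∃ (G : Set X) (β : X → Y), MeasurableSet G ∧ Measurable β ∧
      (∀ x ∈ G, (x, β x) ∈ S) ∧ μ (T \ G) ≤ (1 / 2 : ℝ≥0∞) ^ k := by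
    intro k
    apply exists_partial_selection μ hS hT hsec
    apply pow_ne_zero
    simp
  choose G βf hG hβ hsel hsmall using hex
  set β : X → Y := fun x =>
    if hx : ∃ k, x ∈ G k then βf (Nat.find hx) x else Classical.arbitrary Y with hβdef
  have hDmeas : ∀ k, MeasurableSet (G k \ ⋃ i, ⋃ _ : i < k, G i) :=
    fun k => (hG k).diff (MeasurableSet.iUnion fun i => MeasurableSet.iUnion fun _ => hG i)
  have hfind : ∀ x (hx : ∃ k, x ∈ G k) (k : ℕ), x ∈ G k \ ⋃ i, ⋃ _ : i < k, G i ↔ Nat.find hx = k := by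
    intro x hx k
    simp only [mem_diff, mem_iUnion, not_exists]
    constructor
    · rintro ⟨hxk, hnot⟩
      refine le_antisymm (Nat.find_le hxk) ?_
      by_contra hcon
      push_neg at hcon
      exact hnot (Nat.find hx) hcon (Nat.find_spec hx)
    · rintro rfl
      exact ⟨Nat.find_spec hx, fun i hi => Nat.find_min hx hi⟩
  have hβmeas : Measurable β := by
    intro B hB
    have : β ⁻¹' B = (⋃ k, ((G k \ ⋃ i, ⋃ _ : i < k, G i) ∩ βf k ⁻¹' B)) ∪
        ((⋃ k, G k)ᶜ ∩ (if Classical.arbitrary Y ∈ B then univ else ∅)) := by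
      ext x
      by_cases hx : ∃ k, x ∈ G k
      · have hβx : β x = βf (Nat.find hx) x := dif_pos hx
        simp only [mem_preimage, mem_union, mem_iUnion, mem_inter_iff, mem_compl_iff,
          not_exists]
        constructor
        · intro hmem
          left
          exact ⟨Nat.find hx, (hfind x hx _).mpr rfl, by rwa [← hβx]⟩
        · rintro (⟨k, hDk, hpre⟩ | ⟨hnot, _⟩)
          · have := (hfind x hx k).mp hDk
            rw [hβx, this]
            exact hpre
          · obtain ⟨k, hk⟩ := hx
            exact absurd hk (hnot k)
      · have hβx : β x = Classical.arbitrary Y := dif_neg hx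
        push_neg at hx
        simp only [mem_preimage, mem_union, mem_iUnion, mem_inter_iff, mem_compl_iff, not_exists]
        constructor
        · intro hmem
          right
          refine ⟨fun k => hx k, ?_⟩
          rw [hβx] at hmem
          simp [hmem]
        · rintro (⟨k, hDk, _⟩ | ⟨_, hifpart⟩)
          · exact absurd ((mem_diff _).mp hDk).1 (hx k)
          · rw [hβx]
            by_cases harb : Classical.arbitrary Y ∈ B
            · exact harb
            · simp only [harb, if_false] at hifpart
              exact absurd hifpart (notMem_empty x)
    rw [this]
    refine (MeasurableSet.iUnion fun k => (hDmeas k).inter (hβ k hB)).union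
      (((MeasurableSet.iUnion fun k => hG k).compl).inter ?_)
    split_ifs
    · exact MeasurableSet.univ
    · exact MeasurableSet.empty
  refine ⟨β, hβmeas, ?_⟩
  have hN : μ (T \ ⋃ k, G k) = 0 := by
    have hle : ∀ k, μ (T \ ⋃ k, G k) ≤ (1 / 2 : ℝ≥0∞) ^ k := by
      intro k
      exact le_trans (measure_mono (diff_subset_diff_right (subset_iUnion G k))) (hsmall k)
    have htend : Tendsto (fun k : ℕ => ((1 : ℝ≥0∞) / 2) ^ k) atTop (𝓝 0) :=
      ENNReal.tendsto_pow_atTop_nhds_zero_of_lt_one (by norm_num)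
    exact le_antisymm (ge_of_tendsto' htend hle) zero_le
  rw [ae_iff]
  apply measure_mono_null _ hN
  intro x hx
  simp only [mem_setOf_eq, _root_.not_imp, not_forall] at hx
  obtain ⟨hxT, hxS⟩ := hx
  refine ⟨hxT, ?_⟩
  intro hxU
  rw [mem_iUnion] at hxU
  have hx' : ∃ k, x ∈ G k := hxU
  have : β x = βf (Nat.find hx') x := dif_pos hx'
  exact hxS (this ▸ hsel _ _ (Nat.find_spec hx'))
end AESel

end SelectionMachinery

section MainTheorem
open Set Filter Topology ENNReal NNReal

/-- Measurable selections valued in `A` along which `w` is integrable. -/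
def AdmissibleSelection {d m : ℕ} (A : Set (Fin m → ℝ)) (μ : Measure (Fin d → ℝ))
    (w : (Fin d → ℝ) → (Fin m → ℝ) → ℝ) : Type _ :=
  {f : (Fin d → ℝ) → (Fin m → ℝ) //
    Measurable f ∧ (∀ x, f x ∈ A) ∧ Integrable (fun x => w x (f x)) μ}

/-- Measurable-selection interchange lemma: for a bounded control set `A ⊆ ℝ^m`, a probability
measure `μ` on `ℝ^d` and a jointly measurable `w : ℝ^d × A → ℝ` with `x ↦ inf_{a∈A} w(x,a)`
`μ`-integrable and `w(x,·)` bounded below uniformly for `μ`-a.e. `x`, the infimum over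
measurable selections commutes with the integral:
`inf_{α̃ : ℝ^d → A measurable} ∫ w(x, α̃(x)) μ(dx) = ∫ inf_{a ∈ A} w(x,a) μ(dx)`. -/
theorem inf_integral_eq_integral_inf {d m : ℕ}
    (A : Set (Fin m → ℝ)) (hA : A.Nonempty) (hAbd : Bornology.IsBounded A)
    (hAmeas : MeasurableSet A)
    (μ : Measure (Fin d → ℝ)) [IsProbabilityMeasure μ]
    (w : (Fin d → ℝ) → (Fin m → ℝ) → ℝ)
    (hw : Measurable (fun p : (Fin d → ℝ) × (Fin m → ℝ) => w p.1 p.2))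
    (hint : Integrable (fun x => ⨅ a : A, w x (a : Fin m → ℝ)) μ)
    (hbd : ∃ c : ℝ, ∀ᵐ x ∂μ, ∀ a ∈ A, c ≤ w x a) :
    (⨅ α : AdmissibleSelection A μ w, ∫ x, w x (α.1 x) ∂μ)
      = ∫ x, (⨅ a : A, w x (a : Fin m → ℝ)) ∂μ := by
  classical
  obtain ⟨c, hc⟩ := hbd
  obtain ⟨a₀, ha₀⟩ := hA
  haveI : Nonempty A := ⟨⟨a₀, ha₀⟩⟩
  set g : (Fin d → ℝ) → ℝ := fun x => ⨅ a : A, w x (a : Fin m → ℝ) with hgdef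
  -- lower bound
  have hlow : ∀ α : AdmissibleSelection A μ w, ∫ x, g x ∂μ ≤ ∫ x, w x (α.1 x) ∂μ := by
    intro α
    apply integral_mono_ae hint α.2.2.2
    filter_upwards [hc] with x hx
    have hbb : BddBelow (range fun a : A => w x (a : Fin m → ℝ)) := by
      refine ⟨c, ?_⟩
      rintro v ⟨a, rfl⟩
      exact hx a.1 a.2
    exact ciInf_le hbb ⟨α.1 x, α.2.2.1 x⟩
  -- ε-optimal admissible selections
  have hkey : ∀ ε : ℝ, 0 < ε → ∃ α : AdmissibleSelection A μ w,
      ∫ x, w x (α.1 x) ∂μ ≤ ∫ x, g x ∂μ + ε := by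
    intro ε hε
    obtain ⟨g', hg'sm, hgg'⟩ := hint.1
    have hg'm : Measurable g' := hg'sm.measurable
    set S : Set ((Fin d → ℝ) × (Fin m → ℝ)) :=
      {p | p.2 ∈ A ∧ w p.1 p.2 < g' p.1 + ε} with hSdef
    have hSmeas : MeasurableSet S := by
      refine (hAmeas.preimage measurable_snd).inter ?_
      exact measurableSet_lt hw ((hg'm.comp measurable_fst).add_const ε)
    have hgood : ∀ᵐ x ∂μ, g x = g' x ∧ ∀ a ∈ A, c ≤ w x a := hgg'.and hc
    set T : Set (Fin d → ℝ) :=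
      (toMeasurable μ {x | ¬(g x = g' x ∧ ∀ a ∈ A, c ≤ w x a)})ᶜ with hTdef
    have hbadnull : μ (toMeasurable μ {x | ¬(g x = g' x ∧ ∀ a ∈ A, c ≤ w x a)}) = 0 := by
      rw [measure_toMeasurable]
      exact ae_iff.mp hgood
    have hT : MeasurableSet T := (measurableSet_toMeasurable _ _).compl
    have hTae : ∀ᵐ x ∂μ, x ∈ T := by
      have hc' : μ Tᶜ = 0 := by rw [hTdef, compl_compl]; exact hbadnull
      rw [ae_iff]
      exact hc'
    have hTprop : ∀ x ∈ T, g x = g' x ∧ ∀ a ∈ A, c ≤ w x a := by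
      intro x hx
      by_contra h
      exact hx (subset_toMeasurable _ _ h)
    have hTsec : ∀ x ∈ T, ∃ y, (x, y) ∈ S := by
      intro x hx
      obtain ⟨hgx, hcx⟩ := hTprop x hx
      have hlt : (⨅ a : A, w x (a : Fin m → ℝ)) < g x + ε := lt_add_of_pos_right _ hε
      obtain ⟨a, ha⟩ := exists_lt_of_ciInf_lt hlt
      exact ⟨a.1, a.2, by rw [← hgx]; exact ha⟩
    obtain ⟨β, hβmeas, hβae⟩ := exists_ae_selection μ hSmeas hT hTsec
    set αf : (Fin d → ℝ) → (Fin m → ℝ) := fun x => if β x ∈ A then β x else a₀ with hαdef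
    have hαmeas : Measurable αf := Measurable.ite (hβmeas hAmeas) hβmeas measurable_const
    have hαA : ∀ x, αf x ∈ A := by
      intro x
      by_cases h : β x ∈ A <;> simp [hαdef, h, ha₀]
    have hαae : ∀ᵐ x ∂μ, c ≤ w x (αf x) ∧ w x (αf x) ≤ g x + ε := by
      filter_upwards [hβae, hgood, hTae] with x hxS hxgood hxT
      obtain ⟨hβA, hβlt⟩ := hxS hxT
      have hax : αf x = β x := if_pos hβA
      rw [hax]
      exact ⟨hxgood.2 (β x) hβA, by rw [hxgood.1]; exact hβlt.le⟩
    have hmeasw : AEStronglyMeasurable (fun x => w x (αf x)) μ :=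
      (hw.comp (measurable_id.prodMk hαmeas)).aestronglyMeasurable
    have hintα : Integrable (fun x => w x (αf x)) μ := by
      have hdom : Integrable (fun x => |g x| + (|c| + ε)) μ := hint.abs.add (integrable_const _)
      refine hdom.mono hmeasw ?_
      filter_upwards [hαae] with x hx
      obtain ⟨h1, h2⟩ := hx
      have hnn : (0:ℝ) ≤ |g x| + (|c| + ε) := by positivity
      rw [Real.norm_eq_abs, Real.norm_eq_abs, abs_of_nonneg hnn, abs_le]
      constructor
      · have := neg_abs_le c
        have := abs_nonneg (g x)
        linarith
      · have := le_abs_self (g x)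
        have := neg_abs_le c
        have := abs_nonneg c
        linarith
    refine ⟨⟨αf, hαmeas, hαA, hintα⟩, ?_⟩
    have hmono : ∫ x, w x (αf x) ∂μ ≤ ∫ x, (g x + ε) ∂μ := by
      apply integral_mono_ae hintα (hint.add (integrable_const ε))
      filter_upwards [hαae] with x hx using hx.2
    rwa [integral_add hint (integrable_const ε), integral_const, probReal_univ,
      one_smul] at hmono
  haveI hne : Nonempty (AdmissibleSelection A μ w) := ⟨(hkey 1 one_pos).choose⟩
  apply le_antisymm
  · apply _root_.le_of_forall_pos_le_add
    intro ε hε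
    obtain ⟨α, hα⟩ := hkey ε hε
    refine ciInf_le_of_le ⟨∫ x, g x ∂μ, ?_⟩ α hα
    rintro v ⟨α', rfl⟩
    exact hlow α'
  · exact le_ciInf hlow

end MainTheorem
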